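/- An integral domain D is a Prüfer v-multiplication domain if and only if D is essential and the essential prime spectrum ℰ(D) = {p ∈ Spec(D) : D_p is a valuation domain} is closed in Spec(D) with respect to the constructible topology. -/

import Mathlib

open scoped nonZeroDivisors

/-- The localization of `R` at the prime `p`, viewed inside a field `K` to which `R` maps. -/
def locg {R K : Type*} [CommRing R] [Field K] [Algebra R K] (p : PrimeSpectrum R) :
    Subring K where
  carrier := {x : K | ∃ a b : R, b ∉ p.asIdeal ∧ x * algebraMap R K b = algebraMap R K a}
  zero_mem' := ⟨0, 1, fun h => p.2.ne_top ((Ideal.eq_top_iff_one _).2 h), by simp⟩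
  one_mem' := ⟨1, 1, fun h => p.2.ne_top ((Ideal.eq_top_iff_one _).2 h), by simp⟩
  add_mem' := by
    rintro x y ⟨a₁, b₁, hb₁, e₁⟩ ⟨a₂, b₂, hb₂, e₂⟩
    exact ⟨a₁ * b₂ + a₂ * b₁, b₁ * b₂,
      fun h => ((p.2.mem_or_mem h).elim hb₁ hb₂), by
        rw [map_add, map_mul, map_mul, map_mul]
        linear_combination (algebraMap R K b₂) * e₁ + (algebraMap R K b₁) * e₂⟩
  mul_mem' := by
    rintro x y ⟨a₁, b₁, hb₁, e₁⟩ ⟨a₂, b₂, hb₂, e₂⟩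
    exact ⟨a₁ * a₂, b₁ * b₂,
      fun h => ((p.2.mem_or_mem h).elim hb₁ hb₂), by
        rw [map_mul, map_mul, show x * y * (algebraMap R K b₁ * algebraMap R K b₂)
          = (x * algebraMap R K b₁) * (y * algebraMap R K b₂) by ring, e₁, e₂]⟩
  neg_mem' := by
    rintro x ⟨a, b, hb, e⟩
    exact ⟨-a, b, hb, by rw [map_neg, neg_mul, e]⟩
/-- `I` is a `t`-ideal: its `t`-closure is contained in (hence equal to) `I`. -/
def IsTIdeal (R : Type*) [CommRing R] [IsDomain R] (I : Ideal R) : Prop :=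
  ∀ x : R, (∃ J : Ideal R, J.FG ∧ J ≤ I ∧
    algebraMap R (FractionRing R) x ∈
      (1 / (1 / (J : FractionalIdeal R⁰ (FractionRing R))))) → x ∈ I

/-- `M` is a `t`-maximal ideal: maximal among proper `t`-ideals. -/
def IsTMax (R : Type*) [CommRing R] [IsDomain R] (M : Ideal R) : Prop :=
  IsTIdeal R M ∧ M ≠ ⊤ ∧ ∀ I : Ideal R, IsTIdeal R I → I ≠ ⊤ → M ≤ I → I = M
/-- `R` is a Prüfer `v`-multiplication domain: the localization at every `t`-maximal
ideal is a valuation domain. -/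
def IsPvMD (R : Type*) [CommRing R] [IsDomain R] : Prop :=
  ∀ M : Ideal R, IsTMax R M → ∀ hM : M.IsPrime,
    ValuationRing (locg (K := FractionRing R) ⟨M, hM⟩)
/-- The essential prime spectrum: the primes at which the localization is a valuation
domain. -/
def EssSpec (R : Type*) [CommRing R] [IsDomain R] : Set (PrimeSpectrum R) :=
  {p : PrimeSpectrum R | ValuationRing (locg (K := FractionRing R) p)}

/-- `{D_p : p ∈ Y}` is an essential representation of `R`: each localization is a
valuation domain, and their intersection (inside the quotient field) is `R`. -/
def IsEssentialRep (R : Type*) [CommRing R] [IsDomain R] (Y : Set (PrimeSpectrum R)) : Prop :=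
  (∀ p ∈ Y, ValuationRing (locg (K := FractionRing R) p)) ∧
    (⨅ p ∈ Y, locg (K := FractionRing R) p) = (algebraMap R (FractionRing R)).range

/-- `R` is an essential domain. -/
def IsEssential (R : Type*) [CommRing R] [IsDomain R] : Prop :=
  ∃ Y : Set (PrimeSpectrum R), IsEssentialRep R Y
/-- The constructible (patch) topology on the prime spectrum: the coarsest topology in
which every basic open `D(f)` is clopen. -/
def constructibleTop (A : Type*) [CommRing A] : TopologicalSpace (PrimeSpectrum A) :=
  TopologicalSpace.generateFrom
    {s | (∃ f : A, s = {p : PrimeSpectrum A | f ∉ p.asIdeal}) ∨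
      (∃ f : A, s = {p : PrimeSpectrum A | f ∈ p.asIdeal})}

namespace PvMDAux
variable {R : Type*} [CommRing R] [IsDomain R]

local notation "K" => FractionRing R
local notation "φ" => algebraMap R (FractionRing R)

omit [IsDomain R] in
lemma inj : Function.Injective (algebraMap R (FractionRing R)) :=
  IsFractionRing.injective R (FractionRing R)

lemma oneDiv_ne_zero {J : Ideal R} (hJ : J ≠ ⊥) :
    (1 / (J : FractionalIdeal R⁰ K)) ≠ 0 := by
  intro h
  have h1 : (1 : K) ∈ 1 / (J : FractionalIdeal R⁰ K) := by
    rw [FractionalIdeal.mem_div_iff_of_ne_zero (FractionalIdeal.coeIdeal_ne_zero.2 hJ)]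
    rintro y hy
    obtain ⟨j, hjJ, rfl⟩ := (FractionalIdeal.mem_coeIdeal _).1 hy
    rw [one_mul]
    exact (FractionalIdeal.mem_one_iff _).2 ⟨j, rfl⟩
  rw [h] at h1
  exact one_ne_zero ((FractionalIdeal.mem_zero_iff _).1 h1)

lemma mem_oneDiv_iff {J : Ideal R} (hJ : J ≠ ⊥) {y : K} :
    y ∈ 1 / (J : FractionalIdeal R⁰ K) ↔
      ∀ j ∈ J, y * φ j ∈ (1 : FractionalIdeal R⁰ K) := by
  rw [FractionalIdeal.mem_div_iff_of_ne_zero (FractionalIdeal.coeIdeal_ne_zero.2 hJ)]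
  constructor
  · intro h j hj
    exact h _ ((FractionalIdeal.mem_coeIdeal _).2 ⟨j, hj, rfl⟩)
  · rintro h z hz
    obtain ⟨j, hjJ, rfl⟩ := (FractionalIdeal.mem_coeIdeal _).1 hz
    exact h j hjJ

lemma mem_v_iff {J : Ideal R} (hJ : J ≠ ⊥) {x : K} :
    x ∈ 1 / (1 / (J : FractionalIdeal R⁰ K)) ↔
      ∀ y ∈ 1 / (J : FractionalIdeal R⁰ K), x * y ∈ (1 : FractionalIdeal R⁰ K) :=
  FractionalIdeal.mem_div_iff_of_ne_zero (oneDiv_ne_zero hJ)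

lemma mem_v_bot {x : K} :
    x ∈ 1 / (1 / ((⊥ : Ideal R) : FractionalIdeal R⁰ K)) ↔ x = 0 := by
  rw [FractionalIdeal.coeIdeal_bot, FractionalIdeal.div_zero, FractionalIdeal.div_zero]
  exact FractionalIdeal.mem_zero_iff _

lemma v_self {J : Ideal R} {j : R} (hj : j ∈ J) :
    φ j ∈ 1 / (1 / (J : FractionalIdeal R⁰ K)) := by
  by_cases hJ : J = ⊥
  · subst hJ
    rw [mem_v_bot, show j = 0 from Submodule.mem_bot R |>.1 hj, map_zero]
  · rw [mem_v_iff hJ]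
    intro y hy
    rw [mul_comm]
    exact (mem_oneDiv_iff hJ).1 hy j hj

lemma v_mono {J J' : Ideal R} (h : J ≤ J') {x : K}
    (hx : x ∈ 1 / (1 / (J : FractionalIdeal R⁰ K))) :
    x ∈ 1 / (1 / (J' : FractionalIdeal R⁰ K)) := by
  by_cases hJ : J = ⊥
  · subst hJ
    rw [mem_v_bot] at hx
    subst hx
    exact FractionalIdeal.zero_mem _
  · have hJ' : J' ≠ ⊥ := fun hb => hJ (le_bot_iff.1 (hb ▸ h))
    rw [mem_v_iff hJ']
    intro y hy
    refine (mem_v_iff hJ).1 hx y ?_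
    rw [mem_oneDiv_iff hJ]
    intro j hj
    exact (mem_oneDiv_iff hJ').1 hy j (h hj)

lemma v_add {J : Ideal R} {x y : K}
    (hx : x ∈ 1 / (1 / (J : FractionalIdeal R⁰ K)))
    (hy : y ∈ 1 / (1 / (J : FractionalIdeal R⁰ K))) :
    x + y ∈ 1 / (1 / (J : FractionalIdeal R⁰ K)) :=
  (1 / (1 / (J : FractionalIdeal R⁰ K))).coeToSubmodule.add_mem hx hy

lemma v_mul_left {J : Ideal R} (r : R) {x : K}
    (hx : x ∈ 1 / (1 / (J : FractionalIdeal R⁰ K))) :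
    φ r * x ∈ 1 / (1 / (J : FractionalIdeal R⁰ K)) := by
  have := (1 / (1 / (J : FractionalIdeal R⁰ K))).coeToSubmodule.smul_mem r hx
  rwa [Algebra.smul_def] at this

/-- The `t`-closure of an ideal. -/
def tCl (I : Ideal R) : Ideal R where
  carrier := {z : R | ∃ J : Ideal R, J.FG ∧ J ≤ I ∧
    φ z ∈ 1 / (1 / (J : FractionalIdeal R⁰ K))}
  zero_mem' := ⟨⊥, Submodule.fg_bot, bot_le, by rw [map_zero]; exact mem_v_bot.2 rfl⟩
  add_mem' := by
    rintro x y ⟨J1, f1, l1, h1⟩ ⟨J2, f2, l2, h2⟩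
    exact ⟨J1 ⊔ J2, Submodule.FG.sup f1 f2, sup_le l1 l2, by
      rw [map_add]
      exact v_add (v_mono le_sup_left h1) (v_mono le_sup_right h2)⟩
  smul_mem' := by
    rintro r z ⟨J, f, l, h⟩
    exact ⟨J, f, l, by rw [smul_eq_mul, map_mul]; exact v_mul_left r h⟩

lemma mem_tCl {I : Ideal R} {z : R} :
    z ∈ tCl I ↔ ∃ J : Ideal R, J.FG ∧ J ≤ I ∧
      φ z ∈ 1 / (1 / (J : FractionalIdeal R⁰ K)) := Iff.rfl

lemma le_tCl (I : Ideal R) : I ≤ tCl I := fun z hz =>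
  ⟨Ideal.span {z}, ⟨{z}, by simp⟩, (Ideal.span_le).2 (Set.singleton_subset_iff.2 hz),
    v_self (Ideal.mem_span_singleton_self z)⟩

lemma tCl_isT (I : Ideal R) : IsTIdeal R (tCl I) := by
  rintro z ⟨W, hWfg, hWle, hz⟩
  obtain ⟨T, hT⟩ := hWfg
  have hmem : ∀ b : {x // x ∈ T}, (b : R) ∈ tCl I := fun b =>
    hWle (hT ▸ Ideal.subset_span b.2)
  choose Jb hfg hle hv using hmem
  set Jst : Ideal R := T.attach.sup Jb with hJst
  have hJstfg : Jst.FG :=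
    Finset.sup_induction Submodule.fg_bot (fun a ha b hb => Submodule.FG.sup ha hb)
      (fun b _ => hfg b)
  have hJstle : Jst ≤ I := Finset.sup_le fun b _ => hle b
  have hWv : ∀ w ∈ W, φ w ∈ 1 / (1 / (Jst : FractionalIdeal R⁰ K)) := by
    intro w hw
    rw [← hT] at hw
    induction hw using Submodule.span_induction with
    | mem b hb => exact v_mono (Finset.le_sup (Finset.mem_attach T ⟨b, hb⟩)) (hv ⟨b, hb⟩)
    | zero => rw [map_zero]; exact FractionalIdeal.zero_mem _
    | add a b _ _ ha hb => rw [map_add]; exact v_add ha hb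
    | smul r a _ ha => rw [smul_eq_mul, map_mul]; exact v_mul_left r ha
  by_cases hW : W = ⊥
  · subst hW
    rw [mem_v_bot] at hz
    exact (tCl I).zero_mem' |> fun h0 => by
      rw [show z = 0 from inj (by rw [hz, map_zero])]
      exact (tCl I).zero_mem
  by_cases hJb : Jst = ⊥
  · exfalso
    apply hW
    rw [eq_bot_iff]
    intro w hw
    have := hWv w hw
    rw [hJb, mem_v_bot] at this
    rw [Submodule.mem_bot]
    exact inj (by rw [this, map_zero])
  refine ⟨Jst, hJstfg, hJstle, ?_⟩
  rw [mem_v_iff hJb]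
  intro y hy
  refine (mem_v_iff hW).1 hz y ?_
  rw [mem_oneDiv_iff hW]
  intro j hj
  rw [mul_comm]
  exact (mem_v_iff hJb).1 (hWv j hj) y hy
end PvMDAux
namespace PvMDAux
variable {R : Type*} [CommRing R] [IsDomain R]

local notation "K" => FractionRing R
local notation "φ" => algebraMap R (FractionRing R)

lemma exists_tmax {I : Ideal R} (hIt : IsTIdeal R I) (hItop : I ≠ ⊤) :
    ∃ M : Ideal R, IsTMax R M ∧ I ≤ M := by
  classical
  set s : Set (Ideal R) := {J | IsTIdeal R J ∧ J ≠ ⊤} with hs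
  have hzorn := zorn_le_nonempty₀ s ?_ I ⟨hIt, hItop⟩
  · obtain ⟨m, him, hmax⟩ := hzorn
    exact ⟨m, ⟨hmax.1.1, hmax.1.2,
      fun J hJt hJtop hle => le_antisymm (hmax.2 ⟨hJt, hJtop⟩ hle) hle⟩, him⟩
  · intro c hcs hchain y hyc
    have hdir : DirectedOn (· ≤ ·) c := hchain.directedOn
    have hne : c.Nonempty := ⟨y, hyc⟩
    refine ⟨sSup c, ⟨?_, ?_⟩, fun z hz => le_sSup hz⟩
    · -- sSup of a chain of t-ideals is a t-ideal
      rintro z ⟨J, hJfg, hJle, hzv⟩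
      obtain ⟨T, hT⟩ := hJfg
      have key : ∀ T' : Finset R, (↑T' : Set R) ⊆ J → ∃ I0 ∈ c, ∀ b ∈ T', b ∈ I0 := by
        intro T' hT'
        induction T' using Finset.induction with
        | empty => exact ⟨y, hyc, by simp⟩
        | @insert a T'' ha ih =>
          obtain ⟨I1, hI1c, hI1⟩ := ih (by
            intro b hb
            exact hT' (by simpa using Or.inr hb))
          have haJ : a ∈ sSup c := hJle (hT' (by simp))
          obtain ⟨I2, hI2c, hI2⟩ := (Submodule.mem_sSup_of_directed hne hdir).1 haJ
          obtain ⟨I3, hI3c, h13, h23⟩ := hdir I1 hI1c I2 hI2c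
          refine ⟨I3, hI3c, ?_⟩
          intro b hb
          rcases Finset.mem_insert.1 hb with rfl | hb
          · exact h23 hI2
          · exact h13 (hI1 b hb)
      obtain ⟨I0, hI0c, hI0⟩ := key T (by rw [← hT]; exact Ideal.subset_span)
      have hJI0 : J ≤ I0 := by
        rw [← hT, Ideal.span_le]
        intro b hb
        exact hI0 b hb
      have : z ∈ I0 := (hcs hI0c).1 z ⟨J, ⟨T, hT⟩, hJI0, hzv⟩
      exact le_sSup hI0c this
    · intro htop
      have : (1 : R) ∈ sSup c := htop ▸ Submodule.mem_top
      obtain ⟨I0, hI0c, hI0⟩ := (Submodule.mem_sSup_of_directed hne hdir).1 this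
      exact (hcs hI0c).2 ((Ideal.eq_top_iff_one _).2 hI0)

end PvMDAux
namespace PvMDAux
variable {R : Type*} [CommRing R] [IsDomain R]

local notation "K" => FractionRing R
local notation "φ" => algebraMap R (FractionRing R)

lemma tmax_isPrime {M : Ideal R} (hM : IsTMax R M) : M.IsPrime := by
  refine ⟨hM.2.1, ?_⟩
  intro x y hxy
  by_contra hcon
  push_neg at hcon
  obtain ⟨hx, hy⟩ := hcon
  have hy0 : y ≠ 0 := fun h => hy (h ▸ M.zero_mem)
  -- the t-closure of M ⊔ (x) is all of R
  have hN : tCl (M ⊔ Ideal.span {x}) = ⊤ := by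
    by_contra hne
    have heq : tCl (M ⊔ Ideal.span {x}) = M :=
      hM.2.2 _ (tCl_isT _) hne (le_trans le_sup_left (le_tCl _))
    exact hx (heq ▸ le_tCl _ (le_sup_right (α := Ideal R)
      (Ideal.mem_span_singleton_self x)))
  have h1 : (1 : R) ∈ tCl (M ⊔ Ideal.span {x}) := hN ▸ Submodule.mem_top
  obtain ⟨J, hJfg, hJle, h1v⟩ := h1
  have hJbot : J ≠ ⊥ := by
    rintro rfl
    rw [mem_v_bot] at h1v
    exact one_ne_zero (α := K) (by rw [← map_one φ]; exact h1v)
  -- J' = (y) * J ⊆ M, and y ∈ J'_v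
  set J' : Ideal R := Ideal.span {y} * J with hJ'
  have hJ'fg : J'.FG := Submodule.FG.mul ⟨{y}, by simp⟩ ⟨_, hJfg.choose_spec⟩
  have hJ'le : J' ≤ M := by
    rw [hJ', Ideal.mul_le]
    intro r hr s hs
    obtain ⟨t, rfl⟩ := Ideal.mem_span_singleton'.1 hr
    obtain ⟨m, hm, u, hu, rfl⟩ := Submodule.mem_sup.1 (hJle hs)
    obtain ⟨t', rfl⟩ := Ideal.mem_span_singleton'.1 hu
    have : t * y * (m + t' * x) = (t * y) * m + (t * t') * (x * y) := by ring
    rw [this]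
    exact M.add_mem (M.mul_mem_left _ hm) (M.mul_mem_left _ hxy)
  have hJ'bot : J' ≠ ⊥ := by
    obtain ⟨j, hjJ, hj0⟩ := (Submodule.ne_bot_iff J).1 hJbot
    exact (Submodule.ne_bot_iff J').2
      ⟨y * j, Ideal.mul_mem_mul (Ideal.mem_span_singleton_self y) hjJ,
        mul_ne_zero hy0 hj0⟩
  have hyv : φ y ∈ 1 / (1 / (J' : FractionalIdeal R⁰ K)) := by
    rw [mem_v_iff hJ'bot]
    intro w hw
    have hyw : φ y * w ∈ 1 / (J : FractionalIdeal R⁰ K) := by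
      rw [mem_oneDiv_iff hJbot]
      intro j hj
      have hyj : y * j ∈ J' := Ideal.mul_mem_mul (Ideal.mem_span_singleton_self y) hj
      have := (mem_oneDiv_iff hJ'bot).1 hw (y * j) hyj
      rw [map_mul] at this
      convert this using 1
      ring
    have := (mem_v_iff hJbot).1 h1v (φ y * w) hyw
    rwa [map_one, one_mul] at this
  exact hy (hM.1 y ⟨J', hJ'fg, hJ'le, hyv⟩)
end PvMDAux
namespace PvMDAux
variable {R : Type*} [CommRing R] [IsDomain R]

local notation "𝕂" => FractionRing R
local notation "φ" => algebraMap R (FractionRing R)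

lemma one_notMem (p : PrimeSpectrum R) : (1 : R) ∉ p.asIdeal :=
  fun h => p.2.ne_top ((Ideal.eq_top_iff_one _).2 h)

lemma algebraMap_mem_locg (p : PrimeSpectrum R) (r : R) :
    φ r ∈ locg (K := 𝕂) p :=
  ⟨r, 1, one_notMem p, by rw [map_one, mul_one]⟩

/-- "a divides b modulo p": `s * b = c * a` for some `s ∉ p`. -/
def dvdp (p : PrimeSpectrum R) (a b : R) : Prop :=
  ∃ s c : R, s ∉ p.asIdeal ∧ s * b = c * a

lemma dvdp_refl (p : PrimeSpectrum R) (a : R) : dvdp p a a :=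
  ⟨1, 1, one_notMem p, rfl⟩

lemma dvdp_trans {p : PrimeSpectrum R} {a b c : R} (h1 : dvdp p a b) (h2 : dvdp p b c) :
    dvdp p a c := by
  obtain ⟨s1, c1, hs1, e1⟩ := h1
  obtain ⟨s2, c2, hs2, e2⟩ := h2
  refine ⟨s1 * s2, c2 * c1, fun h => (p.2.mem_or_mem h).elim hs1 hs2, ?_⟩
  calc s1 * s2 * c = s1 * (s2 * c) := by ring
    _ = s1 * (c2 * b) := by rw [e2]
    _ = c2 * (s1 * b) := by ring
    _ = c2 * (c1 * a) := by rw [e1]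
    _ = c2 * c1 * a := by ring

lemma dvdp_total {p : PrimeSpectrum R} (hV : ValuationRing (locg (K := 𝕂) p))
    (a b : R) : dvdp p a b ∨ dvdp p b a := by
  obtain ⟨c, hc⟩ := @ValuationRing.cond _ _ hV.toPreValuationRing
    (⟨φ a, algebraMap_mem_locg p a⟩ : locg (K := 𝕂) p)
    (⟨φ b, algebraMap_mem_locg p b⟩ : locg (K := 𝕂) p)
  obtain ⟨u, t, ht, hut⟩ := c.2
  rcases hc with h | h
  · left
    have h' : φ a * (c : 𝕂) = φ b := congrArg Subtype.val h
    refine ⟨t, u, ht, inj ?_⟩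
    rw [map_mul, map_mul, ← h', ← hut]
    ring
  · right
    have h' : φ b * (c : 𝕂) = φ a := congrArg Subtype.val h
    refine ⟨t, u, ht, inj ?_⟩
    rw [map_mul, map_mul, ← h', ← hut]
    ring

lemma exists_dvdp_min {p : PrimeSpectrum R} (hV : ValuationRing (locg (K := 𝕂) p))
    (T : Finset R) (hT : T.Nonempty) : ∃ a ∈ T, ∀ b ∈ T, dvdp p a b := by
  classical
  induction T using Finset.induction with
  | empty => exact absurd hT (by simp)
  | @insert a T' ha ih =>
    rcases T'.eq_empty_or_nonempty with rfl | hT'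
    · exact ⟨a, by simp, fun b hb => by
        rw [Finset.mem_insert] at hb
        rcases hb with rfl | hb
        · exact dvdp_refl p b
        · simp at hb⟩
    · obtain ⟨m, hmT, hm⟩ := ih hT'
      rcases dvdp_total hV m a with h | h
      · exact ⟨m, Finset.mem_insert_of_mem hmT, fun b hb => by
          rcases Finset.mem_insert.1 hb with rfl | hb
          · exact h
          · exact hm b hb⟩
      · exact ⟨a, Finset.mem_insert_self a T', fun b hb => by
          rcases Finset.mem_insert.1 hb with rfl | hb
          · exact dvdp_refl p b
          · exact dvdp_trans h (hm b hb)⟩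

/-- An essential prime is a `t`-prime. -/
lemma isTIdeal_of_valuation {p : PrimeSpectrum R}
    (hV : ValuationRing (locg (K := 𝕂) p)) : IsTIdeal R p.asIdeal := by
  classical
  rintro x ⟨J, hJfg, hJle, hx⟩
  by_cases hJbot : J = ⊥
  · subst hJbot
    rw [mem_v_bot] at hx
    rw [show x = 0 from inj (by rw [hx, map_zero])]
    exact p.asIdeal.zero_mem
  obtain ⟨T, hT⟩ := hJfg
  have hTne : T.Nonempty := by
    rcases T.eq_empty_or_nonempty with rfl | h
    · exact absurd (by simpa using hT.symm) hJbot
    · exact h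
  obtain ⟨ak, hakT, hak⟩ := exists_dvdp_min hV T hTne
  -- ak is nonzero
  have hak0 : ak ≠ 0 := by
    rintro rfl
    apply hJbot
    rw [← hT, Ideal.span_eq_bot]
    intro b hb
    obtain ⟨s, c, hs, e⟩ := hak b hb
    have hs0 : s ≠ 0 := fun h => hs (h ▸ p.asIdeal.zero_mem)
    rw [mul_zero] at e
    exact (mul_eq_zero.1 e).resolve_left hs0
  -- choose witnesses
  have hch : ∀ b : {z // z ∈ T}, ∃ s c : R, s ∉ p.asIdeal ∧ s * (b : R) = c * ak :=
    fun b => hak b b.2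
  choose sf cf hsf hscf using hch
  set S : R := ∏ b ∈ T.attach, sf b with hS
  have hSp : S ∉ p.asIdeal := by
    rw [hS]
    refine Finset.prod_induction sf (· ∉ p.asIdeal)
      (fun a b ha hb h => (p.2.mem_or_mem h).elim ha hb) (one_notMem p)
      (fun b _ => hsf b)
  have hak_ne : φ ak ≠ 0 := fun h => hak0 (inj (by rw [h, map_zero]))
  -- y = S / ak belongs to 1 / J
  set y : 𝕂 := φ S * (φ ak)⁻¹ with hy
  have hyJ : y ∈ 1 / (J : FractionalIdeal R⁰ 𝕂) := by
    rw [mem_oneDiv_iff hJbot]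
    intro j hj
    rw [← hT] at hj
    induction hj using Submodule.span_induction with
    | mem b hb =>
      have e := hscf ⟨b, hb⟩
      have : S * b = (∏ c ∈ T.attach.erase ⟨b, hb⟩, sf c) * (cf ⟨b, hb⟩ * ak) := by
        rw [← e, hS, ← Finset.mul_prod_erase T.attach sf (Finset.mem_attach T ⟨b, hb⟩)]
        ring
      have h1 : y * φ b = φ (S * b) * (φ ak)⁻¹ := by rw [hy, map_mul]; ring
      have h2 : φ (S * b) = φ ((∏ c ∈ T.attach.erase ⟨b, hb⟩, sf c) * cf ⟨b, hb⟩) * φ ak := by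
        rw [this, ← map_mul]
        exact congrArg φ (by ring)
      rw [h1, h2, mul_inv_cancel_right₀ hak_ne]
      exact (FractionalIdeal.mem_one_iff _).2 ⟨_, rfl⟩
    | zero => rw [map_zero, mul_zero]; exact FractionalIdeal.zero_mem _
    | add a b _ _ ha hb =>
      rw [map_add, mul_add]
      exact (1 : FractionalIdeal R⁰ 𝕂).coeToSubmodule.add_mem ha hb
    | smul r a _ ha =>
      rw [smul_eq_mul, map_mul, show y * (φ r * φ a) = φ r * (y * φ a) by ring]
      have := (1 : FractionalIdeal R⁰ 𝕂).coeToSubmodule.smul_mem r ha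
      rwa [Algebra.smul_def] at this
  -- apply hx to y
  have hxy := (mem_v_iff hJbot).1 hx y hyJ
  obtain ⟨c, hc⟩ := (FractionalIdeal.mem_one_iff _).1 hxy
  -- φ x * (φ S / φ ak) = φ c  ⇒  x * S = c * ak
  have hxS : x * S = c * ak := by
    apply inj
    have h3 : φ x * y * φ ak = φ c * φ ak := by rw [← hc]
    rw [hy] at h3
    rw [map_mul, map_mul]
    calc φ x * φ S = φ x * (φ S * (φ ak)⁻¹) * φ ak := by field_simp
      _ = φ c * φ ak := h3
  have hxSp : x * S ∈ p.asIdeal := by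
    rw [hxS]
    exact p.asIdeal.mul_mem_left c (hJle (hT ▸ Ideal.subset_span hakT))
  exact ((p.2.mem_or_mem hxSp).resolve_right hSp)

end PvMDAux
namespace PvMDAux
variable {R : Type*} [CommRing R] [IsDomain R]

local notation "𝕂" => FractionRing R
local notation "φ" => algebraMap R (FractionRing R)

lemma valuation_of_forall {p : PrimeSpectrum R}
    (h : ∀ x : 𝕂, x ∈ locg (K := 𝕂) p ∨ x⁻¹ ∈ locg (K := 𝕂) p) :
    ValuationRing (locg (K := 𝕂) p) := by
  refine { cond' := fun a b => ?_ }
  by_cases ha : (a : 𝕂) = 0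
  · exact ⟨0, Or.inr (Subtype.ext (by simp [ha]))⟩
  by_cases hb : (b : 𝕂) = 0
  · exact ⟨0, Or.inl (Subtype.ext (by simp [hb]))⟩
  rcases h ((b : 𝕂) / (a : 𝕂)) with hc | hc
  · exact ⟨⟨_, hc⟩, Or.inl (Subtype.ext (by
      show (a : 𝕂) * ((b : 𝕂) / (a : 𝕂)) = b
      field_simp))⟩
  · rw [show ((b : 𝕂) / (a : 𝕂))⁻¹ = (a : 𝕂) / (b : 𝕂) by field_simp] at hc
    exact ⟨⟨_, hc⟩, Or.inr (Subtype.ext (by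
      show (b : 𝕂) * ((a : 𝕂) / (b : 𝕂)) = a
      field_simp))⟩

lemma forall_of_valuation {p : PrimeSpectrum R}
    (hV : ValuationRing (locg (K := 𝕂) p)) :
    ∀ x : 𝕂, x ∈ locg (K := 𝕂) p ∨ x⁻¹ ∈ locg (K := 𝕂) p := by
  intro x
  obtain ⟨a, b, hb, hx⟩ := IsFractionRing.div_surjective (A := R) x
  by_cases ha : φ a = 0
  · left
    rw [← hx, ha, zero_div]
    exact (locg (K := 𝕂) p).zero_mem
  by_cases hb0 : φ b = 0
  · left
    rw [← hx, hb0, div_zero]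
    exact (locg (K := 𝕂) p).zero_mem
  obtain ⟨c, hc⟩ := @ValuationRing.cond _ _ hV.toPreValuationRing
    (⟨φ a, algebraMap_mem_locg p a⟩ : locg (K := 𝕂) p)
    (⟨φ b, algebraMap_mem_locg p b⟩ : locg (K := 𝕂) p)
  rcases hc with h | h
  · right
    have h' : φ a * (c : 𝕂) = φ b := congrArg Subtype.val h
    have : x⁻¹ = (c : 𝕂) := by
      rw [← hx]
      field_simp
      rw [mul_comm] at h'
      rw [mul_comm]
      exact h'.symm
    rw [this]
    exact c.2
  · left
    have h' : φ b * (c : 𝕂) = φ a := congrArg Subtype.val h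
    have : x = (c : 𝕂) := by
      rw [← hx]
      field_simp
      rw [mul_comm] at h'
      rw [mul_comm]
      exact h'.symm
    rw [this]
    exact c.2

lemma locg_mono {p q : PrimeSpectrum R} (h : p.asIdeal ≤ q.asIdeal) :
    locg (K := 𝕂) q ≤ locg (K := 𝕂) p := by
  rintro x ⟨a, b, hb, e⟩
  exact ⟨a, b, fun hbp => hb (h hbp), e⟩

lemma valuation_of_le {p q : PrimeSpectrum R} (h : p.asIdeal ≤ q.asIdeal)
    (hV : ValuationRing (locg (K := 𝕂) q)) :
    ValuationRing (locg (K := 𝕂) p) :=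
  valuation_of_forall fun x =>
    (forall_of_valuation hV x).imp (fun hx => locg_mono h hx) (fun hx => locg_mono h hx)

end PvMDAux
namespace PvMDAux
variable {R : Type*} [CommRing R] [IsDomain R]

/-- The subbasis of the constructible topology. -/
abbrev cSub (R : Type*) [CommRing R] : Set (Set (PrimeSpectrum R)) :=
  {s | (∃ f : R, s = {p : PrimeSpectrum R | f ∉ p.asIdeal}) ∨
    (∃ f : R, s = {p : PrimeSpectrum R | f ∈ p.asIdeal})}

omit [IsDomain R] in
lemma pattern_isOpen (G F : Finset R) :
    @IsOpen _ (constructibleTop R)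
      {q : PrimeSpectrum R | (∀ g ∈ G, g ∈ q.asIdeal) ∧ ∀ f ∈ F, f ∉ q.asIdeal} := by
  letI := constructibleTop R
  have he : {q : PrimeSpectrum R | (∀ g ∈ G, g ∈ q.asIdeal) ∧ ∀ f ∈ F, f ∉ q.asIdeal} =
      (⋂ g ∈ (G : Set R), {q : PrimeSpectrum R | g ∈ q.asIdeal}) ∩
        ⋂ f ∈ (F : Set R), {q : PrimeSpectrum R | f ∉ q.asIdeal} := by
    ext q
    simp [Set.mem_iInter]
  rw [he]
  refine IsOpen.inter ?_ ?_
  · exact Set.Finite.isOpen_biInter G.finite_toSet fun g _ =>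
      TopologicalSpace.GenerateOpen.basic _ (Or.inr ⟨g, rfl⟩)
  · exact Set.Finite.isOpen_biInter F.finite_toSet fun f _ =>
      TopologicalSpace.GenerateOpen.basic _ (Or.inl ⟨f, rfl⟩)

omit [IsDomain R] in
lemma mem_closed_of_patterns {C : Set (PrimeSpectrum R)}
    (hC : @IsClosed _ (constructibleTop R) C) (z : PrimeSpectrum R)
    (h : ∀ G F : Finset R, (∀ g ∈ G, g ∈ z.asIdeal) → (∀ f ∈ F, f ∉ z.asIdeal) →
      ∃ q ∈ C, (∀ g ∈ G, g ∈ q.asIdeal) ∧ ∀ f ∈ F, f ∉ q.asIdeal) :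
    z ∈ C := by
  classical
  by_contra hz
  have hopen : TopologicalSpace.GenerateOpen (cSub R) Cᶜ := by
    letI := constructibleTop R
    exact hC.isOpen_compl
  have claim : ∀ O : Set (PrimeSpectrum R), TopologicalSpace.GenerateOpen (cSub R) O →
      z ∈ O → ∃ G F : Finset R, (∀ g ∈ G, g ∈ z.asIdeal) ∧ (∀ f ∈ F, f ∉ z.asIdeal) ∧
        ∀ q : PrimeSpectrum R, (∀ g ∈ G, g ∈ q.asIdeal) → (∀ f ∈ F, f ∉ q.asIdeal) → q ∈ O := by
    intro O hO
    induction hO with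
    | basic s hs =>
      intro hzs
      rcases hs with ⟨f, rfl⟩ | ⟨f, rfl⟩
      · exact ⟨∅, {f}, by simp, by simpa using hzs, fun q _ hq => by simpa using hq f (by simp)⟩
      · exact ⟨{f}, ∅, by simpa using hzs, by simp, fun q hq _ => by simpa using hq f (by simp)⟩
    | univ => exact fun _ => ⟨∅, ∅, by simp, by simp, fun q _ _ => trivial⟩
    | inter O1 O2 _ _ ih1 ih2 =>
      intro hzO
      obtain ⟨G1, F1, hG1, hF1, hq1⟩ := ih1 hzO.1
      obtain ⟨G2, F2, hG2, hF2, hq2⟩ := ih2 hzO.2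
      refine ⟨G1 ∪ G2, F1 ∪ F2, ?_, ?_, ?_⟩
      · intro g hg
        rcases Finset.mem_union.1 hg with hg | hg
        exacts [hG1 g hg, hG2 g hg]
      · intro f hf
        rcases Finset.mem_union.1 hf with hf | hf
        exacts [hF1 f hf, hF2 f hf]
      · intro q hqG hqF
        exact ⟨hq1 q (fun g hg => hqG g (Finset.mem_union_left _ hg))
            (fun f hf => hqF f (Finset.mem_union_left _ hf)),
          hq2 q (fun g hg => hqG g (Finset.mem_union_right _ hg))
            (fun f hf => hqF f (Finset.mem_union_right _ hf))⟩
    | sUnion S _ ih =>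
      intro hzS
      obtain ⟨t, htS, hzt⟩ := hzS
      obtain ⟨G, F, hG, hF, hq⟩ := ih t htS hzt
      exact ⟨G, F, hG, hF, fun q hqG hqF => ⟨t, htS, hq q hqG hqF⟩⟩
  obtain ⟨G, F, hG, hF, hq⟩ := claim Cᶜ hopen hz
  obtain ⟨q, hqC, hqG, hqF⟩ := h G F hG hF
  exact hq q hqG hqF hqC

end PvMDAux
namespace PvMDAux
variable {R : Type*} [CommRing R] [IsDomain R]

local notation "𝕂" => FractionRing R
local notation "φ" => algebraMap R (FractionRing R)

lemma forward_essential (hP : IsPvMD R) : IsEssential R := by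
  classical
  refine ⟨{p : PrimeSpectrum R | IsTMax R p.asIdeal}, fun p hp => hP p.asIdeal hp p.2, ?_⟩
  apply le_antisymm
  · intro x hx
    obtain ⟨a, b, hbR, hab⟩ := IsFractionRing.div_surjective (A := R) x
    have hbne : φ b ≠ 0 :=
      IsFractionRing.to_map_ne_zero_of_mem_nonZeroDivisors hbR
    have hxb : x * φ b = φ a := by rw [← hab]; field_simp
    -- the conductor ideal
    set I : Ideal R :=
      { carrier := {d | ∃ c : R, d * a = c * b}
        zero_mem' := ⟨0, by ring⟩
        add_mem' := by
          rintro d e ⟨c1, h1⟩ ⟨c2, h2⟩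
          exact ⟨c1 + c2, by rw [add_mul, h1, h2]; ring⟩
        smul_mem' := by
          rintro r d ⟨c, h⟩
          exact ⟨r * c, by rw [smul_eq_mul, mul_assoc, h]; ring⟩ } with hI
    by_cases h1I : (1 : R) ∈ I
    · obtain ⟨c, hc⟩ := h1I
      rw [one_mul] at hc
      refine ⟨c, ?_⟩
      have : φ c * φ b = x * φ b := by rw [← map_mul, ← hc, hxb]
      exact mul_right_cancel₀ hbne this
    · -- I is a proper t-ideal
      have hIt : IsTIdeal R I := by
        rintro z ⟨J, hJfg, hJle, hz⟩
        by_cases hJb : J = ⊥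
        · subst hJb
          rw [mem_v_bot] at hz
          rw [show z = 0 from inj (by rw [hz, map_zero])]
          exact I.zero_mem
        have hxJ : x ∈ 1 / (J : FractionalIdeal R⁰ 𝕂) := by
          rw [mem_oneDiv_iff hJb]
          intro j hj
          obtain ⟨c, hc⟩ := hJle hj
          refine (FractionalIdeal.mem_one_iff _).2 ⟨c, ?_⟩
          have : φ c * φ b = x * φ j * φ b := by
            rw [show x * φ j * φ b = φ j * (x * φ b) by ring, hxb, ← map_mul, ← hc, map_mul]
          exact mul_right_cancel₀ hbne this
        have := (mem_v_iff hJb).1 hz x hxJ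
        obtain ⟨c, hc⟩ := (FractionalIdeal.mem_one_iff _).1 this
        refine ⟨c, inj ?_⟩
        rw [map_mul, map_mul, ← hxb, hc]
        ring
      obtain ⟨M, hM, hIM⟩ := exists_tmax hIt fun h => h1I (h ▸ Submodule.mem_top)
      have hMp := tmax_isPrime hM
      have hxM : x ∈ locg (K := 𝕂) (⟨M, hMp⟩ : PrimeSpectrum R) := by
        have h1 := Subring.mem_iInf.1 hx (⟨M, hMp⟩ : PrimeSpectrum R)
        exact Subring.mem_iInf.1 h1 hM
      obtain ⟨a', b', hb', e⟩ := hxM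
      exfalso
      apply hb'
      refine hIM ⟨a', inj ?_⟩
      rw [map_mul, map_mul, ← hxb, ← e]
      ring
  · rintro x ⟨r, rfl⟩
    exact Subring.mem_iInf.2 fun p => Subring.mem_iInf.2 fun _ => algebraMap_mem_locg p r

lemma forward_closed (hP : IsPvMD R) : @IsClosed _ (constructibleTop R) (EssSpec R) := by
  classical
  letI := constructibleTop R
  rw [← isOpen_compl_iff, isOpen_iff_forall_mem_open]
  intro p hp
  have hnt : ¬ IsTIdeal R p.asIdeal := by
    intro ht
    apply hp
    obtain ⟨M, hM, hpM⟩ := exists_tmax ht p.2.ne_top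
    have hMp := tmax_isPrime hM
    exact valuation_of_le (p := p) (q := ⟨M, hMp⟩) hpM (hP M hM hMp)
  unfold IsTIdeal at hnt
  push_neg at hnt
  obtain ⟨x, ⟨J, hJfg, hJle, hxv⟩, hxp⟩ := hnt
  obtain ⟨T, hT⟩ := hJfg
  refine ⟨{q : PrimeSpectrum R |
      (∀ g ∈ T, g ∈ q.asIdeal) ∧ ∀ f ∈ ({x} : Finset R), f ∉ q.asIdeal}, ?_, ?_, ?_⟩
  · rintro q ⟨hqG, hqF⟩ hqE
    have hqt : IsTIdeal R q.asIdeal := isTIdeal_of_valuation hqE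
    have hJq : J ≤ q.asIdeal := by
      rw [← hT, Ideal.span_le]; intro g hg; exact hqG g hg
    exact hqF x (Finset.mem_singleton_self x) (hqt x ⟨J, ⟨T, hT⟩, hJq, hxv⟩)
  · exact pattern_isOpen T {x}
  · exact ⟨fun g hg => hJle (hT ▸ Ideal.subset_span hg), fun f hf => by
      rw [Finset.mem_singleton] at hf; subst hf; exact hxp⟩

end PvMDAux
namespace PvMDAux
variable {R : Type*} [CommRing R] [IsDomain R]

local notation "𝕂" => FractionRing R
local notation "φ" => algebraMap R (FractionRing R)

lemma backward (hEss : IsEssential R)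
    (hCl : @IsClosed _ (constructibleTop R) (EssSpec R)) : IsPvMD R := by
  classical
  intro M hMt hM
  obtain ⟨Y, hYval, hYint⟩ := hEss
  rcases Y.eq_empty_or_nonempty with rfl | hYne
  · -- R is its own fraction field
    have htop : (algebraMap R 𝕂).range = (⊤ : Subring 𝕂) := by
      rw [← hYint]; simp
    refine valuation_of_forall fun x => Or.inl ?_
    have : x ∈ (algebraMap R 𝕂).range := htop ▸ Subring.mem_top x
    obtain ⟨r, rfl⟩ := this
    exact algebraMap_mem_locg _ r
  -- the finite intersection property
  have hFIP : ∀ G : Finset R, (∀ g ∈ G, g ∈ M) → ∃ p ∈ Y, ∀ g ∈ G, g ∈ p.asIdeal := by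
    intro G hG
    by_contra hcon
    push_neg at hcon
    obtain ⟨p₀, hp₀⟩ := hYne
    obtain ⟨g₀, hg₀G, hg₀p⟩ := hcon p₀ hp₀
    have hg₀0 : g₀ ≠ 0 := fun h => hg₀p (h ▸ p₀.asIdeal.zero_mem)
    set J : Ideal R := Ideal.span (G : Set R) with hJ
    have hJb : J ≠ ⊥ := fun h => hg₀0 ((Ideal.span_eq_bot.1 h) g₀ hg₀G)
    have h1v : φ 1 ∈ 1 / (1 / (J : FractionalIdeal R⁰ 𝕂)) := by
      rw [mem_v_iff hJb]
      intro y hy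
      rw [map_one, one_mul]
      have hyr : y ∈ (algebraMap R 𝕂).range := by
        rw [← hYint]
        refine Subring.mem_iInf.2 fun p => Subring.mem_iInf.2 fun hp => ?_
        obtain ⟨g, hgG, hgp⟩ := hcon p hp
        have := (mem_oneDiv_iff hJb).1 hy g (Ideal.subset_span hgG)
        obtain ⟨c, hc⟩ := (FractionalIdeal.mem_one_iff _).1 this
        exact ⟨c, g, hgp, hc.symm⟩
      obtain ⟨c, hc⟩ := hyr
      exact (FractionalIdeal.mem_one_iff _).2 ⟨c, hc⟩
    have h1M : (1 : R) ∈ M :=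
      hMt.1 1 ⟨J, ⟨G, rfl⟩, Ideal.span_le.2 (fun g hg => hG g hg), h1v⟩
    exact hMt.2.1 ((Ideal.eq_top_iff_one M).2 h1M)
  -- the ultrafilter
  set 𝒮 : Set (Set (PrimeSpectrum R)) :=
    {A | ∃ x ∈ M, A = {p : PrimeSpectrum R | p ∈ Y ∧ x ∈ p.asIdeal}} ∪
      {{p : PrimeSpectrum R | p ∈ Y}} with h𝒮
  have hNB : (Filter.generate 𝒮).NeBot := by
    rw [Filter.generate_neBot_iff]
    intro t hts htf
    have hch : ∀ A : t, ∃ x : R, x ∈ M ∧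
        {p : PrimeSpectrum R | p ∈ Y ∧ x ∈ p.asIdeal} ⊆ (A : Set (PrimeSpectrum R)) := by
      rintro ⟨A, hA⟩
      rcases hts hA with ⟨x, hxM, rfl⟩ | hA'
      · exact ⟨x, hxM, subset_rfl⟩
      · have hAeq : A = {p : PrimeSpectrum R | p ∈ Y} := hA'
        refine ⟨0, M.zero_mem, ?_⟩
        intro p hp
        show p ∈ A
        rw [hAeq]
        exact hp.1
    choose xf hxfM hxfsub using hch
    haveI : Finite t := htf
    haveI : Fintype t := Set.Finite.fintype htf
    set G : Finset R := Finset.univ.image (fun A : t => xf A) with hG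
    obtain ⟨p, hpY, hpG⟩ := hFIP G (by
      intro g hg
      obtain ⟨A, _, rfl⟩ := Finset.mem_image.1 hg
      exact hxfM A)
    refine ⟨p, ?_⟩
    rw [Set.mem_sInter]
    intro A hA
    refine hxfsub ⟨A, hA⟩ ⟨hpY, ?_⟩
    exact hpG _ (Finset.mem_image.2 ⟨⟨A, hA⟩, Finset.mem_univ _, rfl⟩)
  letI U : Ultrafilter (PrimeSpectrum R) := @Ultrafilter.of _ (Filter.generate 𝒮) hNB
  have hU : ∀ A ∈ 𝒮, A ∈ U :=
    fun A hA => (@Ultrafilter.of_le _ (Filter.generate 𝒮) hNB) (Filter.mem_generate_of_mem hA)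
  have hYU : {p : PrimeSpectrum R | p ∈ Y} ∈ U := hU _ (Or.inr rfl)
  -- the limit prime ideal
  set P : Ideal R :=
    { carrier := {x : R | {p : PrimeSpectrum R | p ∈ Y ∧ x ∈ p.asIdeal} ∈ U}
      zero_mem' := Filter.mem_of_superset hYU (fun p hp => ⟨hp, p.asIdeal.zero_mem⟩)
      add_mem' := by
        intro x y hx hy
        exact Filter.mem_of_superset (Filter.inter_mem hx hy)
          (fun p hp => ⟨hp.1.1, p.asIdeal.add_mem hp.1.2 hp.2.2⟩)
      smul_mem' := by
        intro r x hx
        exact Filter.mem_of_superset hx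
          (fun p hp => ⟨hp.1, p.asIdeal.mul_mem_left r hp.2⟩) } with hP
  have hPtop : P ≠ ⊤ := by
    intro h
    have h1 : (1 : R) ∈ P := h ▸ Submodule.mem_top
    have : {p : PrimeSpectrum R | p ∈ Y ∧ (1 : R) ∈ p.asIdeal} = ∅ := by
      ext p
      simp only [Set.mem_setOf_eq, Set.mem_empty_iff_false, iff_false, not_and]
      exact fun _ => one_notMem p
    rw [hP] at h1
    have h1' : {p : PrimeSpectrum R | p ∈ Y ∧ (1 : R) ∈ p.asIdeal} ∈ U := h1
    rw [this] at h1'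
    exact Filter.empty_notMem (↑U : Filter (PrimeSpectrum R)) h1'
  have hPprime : P.IsPrime := by
    refine ⟨hPtop, ?_⟩
    intro x y hxy
    have hsub : {p : PrimeSpectrum R | p ∈ Y ∧ x * y ∈ p.asIdeal} ⊆
        {p : PrimeSpectrum R | p ∈ Y ∧ x ∈ p.asIdeal} ∪
          {p : PrimeSpectrum R | p ∈ Y ∧ y ∈ p.asIdeal} := by
      rintro p ⟨hpY, hpxy⟩
      rcases p.2.mem_or_mem hpxy with h | h
      · exact Or.inl ⟨hpY, h⟩
      · exact Or.inr ⟨hpY, h⟩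
    have := Filter.mem_of_superset (hxy : _ ∈ U) hsub
    exact (Ultrafilter.union_mem_iff.1 this)
  have hMP : M ≤ P := fun x hx => hU _ (Or.inl ⟨x, hx, rfl⟩)
  set pU : PrimeSpectrum R := ⟨P, hPprime⟩ with hpU
  -- pU is in the essential spectrum, using closedness
  have hpUE : pU ∈ EssSpec R := by
    refine mem_closed_of_patterns hCl pU ?_
    intro G F hG hF
    have hGU : ∀ g ∈ G, {p : PrimeSpectrum R | p ∈ Y ∧ g ∈ p.asIdeal} ∈ U :=
      fun g hg => hG g hg
    have hFU : ∀ f ∈ F, {p : PrimeSpectrum R | p ∈ Y ∧ f ∈ p.asIdeal}ᶜ ∈ U :=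
      fun f hf => Ultrafilter.compl_mem_iff_notMem.2 (hF f hf)
    have hbig : ({p : PrimeSpectrum R | p ∈ Y} ∩
        ((⋂ g ∈ G, {p : PrimeSpectrum R | p ∈ Y ∧ g ∈ p.asIdeal}) ∩
          ⋂ f ∈ F, {p : PrimeSpectrum R | p ∈ Y ∧ f ∈ p.asIdeal}ᶜ)) ∈ U := by
      refine Filter.inter_mem hYU (Filter.inter_mem ?_ ?_)
      · exact (Filter.biInter_finset_mem G).2 hGU
      · exact (Filter.biInter_finset_mem F).2 hFU
    obtain ⟨q, hqY, hq⟩ := Ultrafilter.nonempty_of_mem hbig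
    refine ⟨q, hYval q hqY, fun g hg => ?_, fun f hf => ?_⟩
    · have := (Set.mem_iInter₂.1 hq.1) g hg
      exact this.2
    · have := (Set.mem_iInter₂.1 hq.2) f hf
      exact fun hfq => this ⟨hqY, hfq⟩
  -- P is a proper t-ideal containing M, hence P = M
  have hPt : IsTIdeal R P := isTIdeal_of_valuation hpUE
  have hPM : P = M := hMt.2.2 P hPt hPtop hMP
  have heq : pU = (⟨M, hM⟩ : PrimeSpectrum R) := PrimeSpectrum.ext hPM
  have hpUE' : ValuationRing (locg (K := 𝕂) pU) := hpUE
  rw [heq] at hpUE'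
  exact hpUE'

end PvMDAux
theorem isPvMD_iff_essential_and_essSpec_isClosed {R : Type*} [CommRing R] [IsDomain R] :
    IsPvMD R ↔ IsEssential R ∧ @IsClosed _ (constructibleTop R) (EssSpec R) := by
  constructor
  · intro hP
    exact ⟨PvMDAux.forward_essential hP, PvMDAux.forward_closed hP⟩
  · rintro ⟨h1, h2⟩
    exact PvMDAux.backward h1 h2
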